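/- Let B = K + ℂ·S^n ⊂ B(ℓ²(ℤ≥0)) for n ≥ 0, where S is the backward unilateral shift and K the compacts. Then B is a closed subspace of B(ℓ²(ℤ≥0)), closed under left multiplication by K^+ = K + ℂ·1, and as a left K^+-module it is isomorphic to the projective module (K^+ ⊕ K^+)·(I_1 ⊕ P_n), i.e. to the image of the projection diag(1, P_n) ∈ M_2(K^+) acting on (K^+)². -/
import Mathlib


open scoped ENNReal

noncomputable section

/-- The Hilbert space ℓ²(ℤ≥0). -/
abbrev H2 : Type := lp (fun _ : ℕ => ℂ) 2

/-- The standard orthonormal basis vectors of ℓ²(ℤ≥0). -/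
noncomputable def e (i : ℕ) : H2 := lp.single 2 i 1

lemma e_apply (i j : ℕ) : (e i : ∀ _ : ℕ, ℂ) j = if j = i then 1 else 0 := by
  unfold e
  rcases eq_or_ne j i with h | h
  · simp [h, lp.single_apply_self]
  · simp [h, lp.single_apply_ne]

lemma coord_eq_inner (f : H2) (j : ℕ) : f j = @inner ℂ _ _ (e j) f := by
  rw [show (e j : H2) = lp.single 2 j (1:ℂ) from rfl, lp.inner_single_left]
  simp

lemma ext_coord {f g : H2} (h : ∀ i : ℕ, (f : ∀ _ : ℕ, ℂ) i = g i) : f = g := by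
  ext i; exact h i

lemma clm_ext_basis {T T' : H2 →L[ℂ] H2} (h : ∀ i, T (e i) = T' (e i)) : T = T' := by
  apply ContinuousLinearMap.ext
  intro f
  have hf := lp.hasSum_single (E := fun _ : ℕ => ℂ) (by norm_num : (2:ℝ≥0∞) ≠ ⊤) f
  have h1 : ∀ i : ℕ, lp.single 2 i (f i) = f i • e i := by
    intro i
    rw [show (f i : ℂ) = f i • (1:ℂ) by simp, lp.single_smul]
    simp [e]
  have hT := hf.mapL T
  have hT' := hf.mapL T'
  refine hT.unique ?_
  refine HasSum.congr_fun hT' fun i => ?_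
  rw [h1, map_smul, map_smul, h i]

section shifts
variable (S Pn : H2 →L[ℂ] H2) (n : ℕ)
variable (hS0 : S (e 0) = 0) (hS : ∀ p, 1 ≤ p → S (e p) = e (p - 1))
variable (hPn : ∀ i, (i < n → Pn (e i) = e i) ∧ (n ≤ i → Pn (e i) = 0))

include hS0 hS in
lemma starS_e (i : ℕ) : (star S) (e i) = e (i + 1) := by
  apply ext_coord
  intro j
  rw [coord_eq_inner, ContinuousLinearMap.star_eq_adjoint,
    ContinuousLinearMap.adjoint_inner_right]
  rcases Nat.eq_zero_or_pos j with hj | hj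
  · subst hj
    rw [hS0]
    simp [e_apply]
  · rw [hS j hj]
    rw [show (e i : H2) = lp.single 2 i (1:ℂ) from rfl, lp.inner_single_right]
    rw [e_apply]
    rcases eq_or_ne j (i+1) with h | h
    · simp [h, e_apply]
    · have : i ≠ j - 1 := by omega
      simp [e_apply, h, this]

include hS0 hS in
lemma Sn_e : ∀ (m i : ℕ), (S ^ m) (e i) = if m ≤ i then e (i - m) else 0 := by
  intro m
  induction m with
  | zero => intro i; simp
  | succ k ih =>
    intro i
    rw [pow_succ, ContinuousLinearMap.mul_apply]
    rcases Nat.eq_zero_or_pos i with hi | hi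
    · subst hi
      rw [hS0, map_zero]
      simp
    · rw [hS i hi, ih (i-1)]
      rcases le_or_gt (k+1) i with h | h
      · rw [if_pos (by omega), if_pos h]
        congr 1
        omega
      · rw [if_neg (by omega), if_neg (by omega)]

include hS0 hS in
lemma Tn_e : ∀ (m i : ℕ), ((star S) ^ m) (e i) = e (i + m) := by
  intro m
  induction m with
  | zero => intro i; simp
  | succ k ih =>
    intro i
    rw [pow_succ, ContinuousLinearMap.mul_apply, starS_e S hS0 hS, ih (i+1)]
    congr 1
    omega

include hS0 hS in
lemma idA : S ^ n * (star S) ^ n = 1 := by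
  apply clm_ext_basis
  intro i
  rw [ContinuousLinearMap.mul_apply, Tn_e S hS0 hS, Sn_e S hS0 hS]
  rw [if_pos (by omega)]
  simp

include hS0 hS hPn in
lemma idB : (star S) ^ n * S ^ n = 1 - Pn := by
  apply clm_ext_basis
  intro i
  rw [ContinuousLinearMap.mul_apply, Sn_e S hS0 hS, ContinuousLinearMap.sub_apply,
    ContinuousLinearMap.one_apply]
  rcases le_or_gt n i with h | h
  · rw [if_pos h, Tn_e S hS0 hS, (hPn i).2 h]
    rw [show i - n + n = i by omega]
    simp
  · rw [if_neg (by omega), (hPn i).1 h, map_zero, sub_self]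

include hS0 hS hPn in
lemma idC : S ^ n * Pn = 0 := by
  apply clm_ext_basis
  intro i
  rw [ContinuousLinearMap.mul_apply]
  rcases le_or_gt n i with h | h
  · rw [(hPn i).2 h, map_zero, ContinuousLinearMap.zero_apply]
  · rw [(hPn i).1 h, Sn_e S hS0 hS, if_neg (by omega), ContinuousLinearMap.zero_apply]

include hS0 hS hPn in
lemma idD : Pn * (star S) ^ n = 0 := by
  apply clm_ext_basis
  intro i
  rw [ContinuousLinearMap.mul_apply, Tn_e S hS0 hS, (hPn (i+n)).2 (by omega),
    ContinuousLinearMap.zero_apply]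

include hPn in
lemma idE : Pn * Pn = Pn := by
  apply clm_ext_basis
  intro i
  rw [ContinuousLinearMap.mul_apply]
  rcases le_or_gt n i with h | h
  · rw [(hPn i).2 h, map_zero]
  · rw [(hPn i).1 h, (hPn i).1 h]

end shifts

lemma rankOne_compact (v w : H2) :
    IsCompactOperator ⇑((innerSL ℂ v).smulRight w) := by
  refine ⟨(fun c : ℂ => c • w) '' Metric.closedBall 0 ‖v‖,
    (isCompact_closedBall 0 ‖v‖).image (by continuity), ?_⟩
  refine Filter.mem_of_superset (Metric.closedBall_mem_nhds 0 one_pos) ?_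
  intro x hx
  refine ⟨@inner ℂ _ _ v x, ?_, rfl⟩
  rw [Metric.mem_closedBall, dist_zero_right]
  calc ‖@inner ℂ _ _ v x‖ ≤ ‖v‖ * ‖x‖ := norm_inner_le_norm v x
  _ ≤ ‖v‖ * 1 := by
      have := Metric.mem_closedBall.mp hx
      rw [dist_zero_right] at this
      exact mul_le_mul_of_nonneg_left this (norm_nonneg v)
  _ = ‖v‖ := mul_one _

lemma finset_sum_compact {ι : Type*} (s : Finset ι) (f : ι → (H2 →L[ℂ] H2))
    (h : ∀ i ∈ s, IsCompactOperator ⇑(f i)) : IsCompactOperator ⇑(∑ i ∈ s, f i) := by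
  classical
  induction s using Finset.cons_induction with
  | empty => simpa using (isCompactOperator_zero (M₁ := H2) (M₂ := H2))
  | cons a s ha ih =>
    rw [Finset.sum_cons]
    have h1 : ⇑(f a + ∑ i ∈ s, f i) = ⇑(f a) + ⇑(∑ i ∈ s, f i) := rfl
    rw [h1]
    exact (h a (Finset.mem_cons_self a s)).add
      (ih fun i hi => h i (Finset.mem_cons_of_mem hi))

lemma Pn_compact (Pn : H2 →L[ℂ] H2) (n : ℕ)
    (hPn : ∀ i, (i < n → Pn (e i) = e i) ∧ (n ≤ i → Pn (e i) = 0)) :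
    IsCompactOperator ⇑Pn := by
  have hPnEq : Pn = ∑ i ∈ Finset.range n, (innerSL ℂ (e i)).smulRight (e i) := by
    apply clm_ext_basis
    intro j
    rw [ContinuousLinearMap.sum_apply]
    have : ∀ i, ((innerSL ℂ (e i)).smulRight (e i)) (e j)
        = if i = j then e i else 0 := by
      intro i
      rw [ContinuousLinearMap.smulRight_apply, innerSL_apply_apply]
      rw [show (e i : H2) = lp.single 2 i (1:ℂ) from rfl, lp.inner_single_left]
      rw [e_apply]
      rcases eq_or_ne i j with h | h
      · simp [h]
      · simp [h]
    rw [Finset.sum_congr rfl fun i _ => this i, Finset.sum_ite_eq']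
    rcases le_or_gt n j with h | h
    · rw [if_neg (by simp; omega), (hPn j).2 h]
    · rw [if_pos (by simp [h]), (hPn j).1 h]
  rw [hPnEq]
  exact finset_sum_compact _ _ fun i _ => rankOne_compact (e i) (e i)

set_option maxHeartbeats 1000000 in
set_option synthInstance.maxHeartbeats 1000000 in
lemma Bset_closed (V : H2 →L[ℂ] H2) :
    IsClosed {x : H2 →L[ℂ] H2 | ∃ c : ℂ, IsCompactOperator ⇑(x - c • V)} := by
  classical
  let A := (H2 →L[ℂ] H2)
  let C : Submodule ℂ A := compactOperator (RingHom.id ℂ) H2 H2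
  have hC : IsClosed (C : Set A) := isClosed_setOf_isCompactOperator
  haveI : IsClosed (C : Set A) := hC
  have hcont : Continuous C.mkQ :=
    AddMonoidHomClass.continuous_of_bound C.mkQ 1
      (fun x => by simpa using Submodule.Quotient.norm_mk_le C x)
  haveI : FiniteDimensional ℂ (Submodule.span ℂ ({V} : Set A)) :=
    FiniteDimensional.span_of_finite ℂ (Set.finite_singleton V)
  haveI : FiniteDimensional ℂ ((Submodule.span ℂ ({V} : Set A)).map C.mkQ) :=
    Module.Finite.map _ _
  have hclosed : IsClosed (((Submodule.span ℂ ({V} : Set A)).map C.mkQ : Set (A ⧸ C))) :=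
    Submodule.closed_of_finiteDimensional _
  have hEq : {x : A | ∃ c : ℂ, IsCompactOperator ⇑(x - c • V)} =
      C.mkQ ⁻¹' (((Submodule.span ℂ ({V} : Set A)).map C.mkQ : Set (A ⧸ C))) := by
    ext x
    simp only [Set.mem_setOf_eq, Set.mem_preimage, SetLike.mem_coe, Submodule.mem_map]
    constructor
    · rintro ⟨c, hc⟩
      refine ⟨c • V, Submodule.smul_mem _ c (Submodule.mem_span_singleton_self V), ?_⟩
      rw [Submodule.mkQ_apply, Submodule.mkQ_apply, Submodule.Quotient.eq]
      have : x - c • V ∈ C := hc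
      show c • V - x ∈ C
      have h3 : c • V - x = -(x - c • V) := by abel
      rw [h3]
      exact neg_mem this
    · rintro ⟨v, hv, hvx⟩
      rw [Submodule.mem_span_singleton] at hv
      obtain ⟨c, rfl⟩ := hv
      refine ⟨c, ?_⟩
      rw [Submodule.mkQ_apply, Submodule.mkQ_apply, Submodule.Quotient.eq] at hvx
      have : c • V - x ∈ C := hvx
      have h3 : x - c • V = -(c • V - x) := by abel
      show x - c • V ∈ C
      rw [h3]
      exact neg_mem this
  rw [hEq]
  exact hclosed.preimage hcont

lemma coe_add' (X Y : H2 →L[ℂ] H2) : ⇑(X + Y) = ⇑X + ⇑Y := rfl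
lemma coe_mul' (X Y : H2 →L[ℂ] H2) : ⇑(X * Y) = ⇑X ∘ ⇑Y := rfl
lemma coe_smul'' (c : ℂ) (X : H2 →L[ℂ] H2) : ⇑(c • X) = c • ⇑X := rfl


/-- For `n ≥ 0`, the space `B = K + ℂ·S^n ⊆ B(ℓ²(ℤ≥0))` is closed, invariant under left
multiplication by `K⁺ = K + ℂ·1`, and as a left `K⁺`-module it is isomorphic to the
projective module `(K⁺ ⊕ K⁺)·(I₁ ⊕ P_n)`, realized concretely as
`{(x, y·P_n) : x, y ∈ K⁺}`. -/
theorem stmt12 (n : ℕ) (S Pn : H2 →L[ℂ] H2)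
    (hS0 : S (e 0) = 0) (hS : ∀ p, 1 ≤ p → S (e p) = e (p - 1))
    (hPn : ∀ i, (i < n → Pn (e i) = e i) ∧ (n ≤ i → Pn (e i) = 0)) :
    let Kplus : Set (H2 →L[ℂ] H2) := {x | ∃ c : ℂ, IsCompactOperator ⇑(x - c • 1)}
    let Bset : Set (H2 →L[ℂ] H2) := {x | ∃ c : ℂ, IsCompactOperator ⇑(x - c • S ^ n)}
    let Mset : Set ((H2 →L[ℂ] H2) × (H2 →L[ℂ] H2)) :=
      {z | z.1 ∈ Kplus ∧ ∃ y ∈ Kplus, z.2 = y * Pn}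
    IsClosed Bset ∧
    (∀ a ∈ Kplus, ∀ b ∈ Bset, a * b ∈ Bset) ∧
    ∃ φ : (H2 →L[ℂ] H2) →ₗ[ℂ] ((H2 →L[ℂ] H2) × (H2 →L[ℂ] H2)),
      Set.BijOn φ Bset Mset ∧
      ∀ a ∈ Kplus, ∀ b ∈ Bset, φ (a * b) = (a * (φ b).1, a * (φ b).2) := by
  intro Kplus Bset Mset
  have hA := idA S n hS0 hS
  have hB := idB S Pn n hS0 hS hPn
  have hCzero := idC S Pn n hS0 hS hPn
  have hD := idD S Pn n hS0 hS hPn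
  have hE := idE Pn n hPn
  have hPc : IsCompactOperator ⇑Pn := Pn_compact Pn n hPn
  set Tn : H2 →L[ℂ] H2 := (star S) ^ n with hTn
  refine ⟨Bset_closed (S ^ n), ?_, ?_⟩
  · rintro a ⟨ca, hca⟩ b ⟨cb, hcb⟩
    refine ⟨ca * cb, ?_⟩
    have key : a * b - (ca * cb) • (S ^ n)
        = (a - ca • 1) * b + ca • (b - cb • S ^ n) := by
      rw [sub_mul, smul_mul_assoc, one_mul, smul_sub, smul_smul]
      abel
    rw [key, coe_add', coe_mul', coe_smul'']
    exact (hca.comp_clm b).add (hcb.smul ca)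
  · refine ⟨(LinearMap.mulRight ℂ Tn).prod (LinearMap.mulRight ℂ Pn), ⟨?_, ?_, ?_⟩, ?_⟩
    · -- MapsTo
      rintro b ⟨c, hc⟩
      refine ⟨⟨c, ?_⟩, b * Pn, ⟨0, ?_⟩, ?_⟩
      · have key : b * Tn - c • 1 = (b - c • S ^ n) * Tn := by
          rw [sub_mul, smul_mul_assoc, hA]
        show IsCompactOperator ⇑(b * Tn - c • 1)
        rw [key, coe_mul']
        exact hc.comp_clm Tn
      · have key : b * Pn - (0:ℂ) • 1 = (b - c • S ^ n) * Pn := by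
          rw [sub_mul, smul_mul_assoc, hCzero, smul_zero, sub_zero, zero_smul, sub_zero]
        show IsCompactOperator ⇑(b * Pn - (0:ℂ) • 1)
        rw [key, coe_mul']
        exact hc.comp_clm Pn
      · show (LinearMap.mulRight ℂ Pn) b = (b * Pn) * Pn
        rw [LinearMap.mulRight_apply, mul_assoc, hE]
    · -- InjOn
      rintro b _ b' _ heq
      have h1 : b * Tn = b' * Tn := congrArg Prod.fst heq
      have h2 : b * Pn = b' * Pn := congrArg Prod.snd heq
      have key : ∀ x : H2 →L[ℂ] H2, (x * Tn) * S ^ n + x * Pn = x := by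
        intro x
        rw [mul_assoc, hB, mul_sub, mul_one]
        abel
      calc b = (b * Tn) * S ^ n + b * Pn := (key b).symm
        _ = (b' * Tn) * S ^ n + b' * Pn := by rw [h1, h2]
        _ = b' := key b'
    · -- SurjOn
      rintro z ⟨⟨cx, hx⟩, y, ⟨cy, hy⟩, hz2⟩
      refine ⟨z.1 * S ^ n + y * Pn, ⟨cx, ?_⟩, ?_⟩
      · have key : z.1 * S ^ n + y * Pn - cx • S ^ n
            = (z.1 - cx • 1) * S ^ n + ((y - cy • 1) * Pn + cy • Pn) := by
          rw [sub_mul, smul_mul_assoc, one_mul, sub_mul, smul_mul_assoc, one_mul]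
          abel
        rw [key, coe_add', coe_add', coe_mul', coe_mul', coe_smul'']
        exact (hx.comp_clm (S ^ n)).add ((hy.comp_clm Pn).add (hPc.smul cy))
      · show ((z.1 * S ^ n + y * Pn) * Tn, (z.1 * S ^ n + y * Pn) * Pn) = z
        have e1 : (z.1 * S ^ n + y * Pn) * Tn = z.1 := by
          rw [add_mul, mul_assoc, mul_assoc, hA, hD, mul_one, mul_zero, add_zero]
        have e2 : (z.1 * S ^ n + y * Pn) * Pn = z.2 := by
          rw [add_mul, mul_assoc, mul_assoc, hCzero, hE, mul_zero, zero_add, hz2]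
        rw [e1, e2]
    · -- equivariance
      intro a _ b _
      show ((a * b) * Tn, (a * b) * Pn) = (a * (b * Tn), a * (b * Pn))
      rw [mul_assoc, mul_assoc]
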